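/- For every ε > 0, for Lebesgue almost every α ∈ ℝ there exists t₀ > 0 such that for all t ≥ t₀, 1/(t² (log t)^{2+ε}) ≤ |1 + (e^{it} + e^{itα})/2|. -/

import Mathlib

open MeasureTheory Real Filter

noncomputable def psiD (δ : ℝ) (q : ℕ) : ℝ := 1 / ((q:ℝ)^2 * (1 + Real.log q) ^ (1+δ))

lemma log_nat_nonneg (n : ℕ) : 0 ≤ Real.log n := by
  cases n with
  | zero => simp
  | succ m => exact Real.log_nonneg (by exact_mod_cast Nat.one_le_iff_ne_zero.2 (Nat.succ_ne_zero m))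

lemma summable_aux {δ : ℝ} (hδ : 0 < δ) :
    Summable (fun q : ℕ => 1 / ((q:ℝ) * (1 + Real.log q) ^ (1+δ))) := by
  have hbase : ∀ n : ℕ, (0:ℝ) < 1 + Real.log n := fun n => by
    have := log_nat_nonneg n; linarith
  have hnonneg : ∀ n : ℕ, 0 ≤ 1 / ((n:ℝ) * (1 + Real.log n) ^ (1+δ)) := fun n => by
    have := (hbase n).le
    positivity
  have hanti : ∀ ⦃m n : ℕ⦄, 0 < m → m ≤ n →
      1 / ((n:ℝ) * (1 + Real.log n) ^ (1+δ)) ≤ 1 / ((m:ℝ) * (1 + Real.log m) ^ (1+δ)) := by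
    intro m n hm hmn
    have hm' : (0:ℝ) < m := by exact_mod_cast hm
    have hmn' : (m:ℝ) ≤ n := by exact_mod_cast hmn
    apply one_div_le_one_div_of_le
    · positivity
    · apply mul_le_mul hmn' (Real.rpow_le_rpow (hbase m).le ?_ (by linarith)) (by positivity)
        (by positivity)
      have := Real.log_le_log hm' hmn'
      linarith
  rw [← summable_condensed_iff_of_nonneg hnonneg hanti]
  have heq : ∀ k : ℕ, (2:ℝ) ^ k * (1 / (((2^k : ℕ):ℝ) * (1 + Real.log ((2:ℕ)^k : ℕ)) ^ (1+δ)))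
      = 1 / (1 + k * Real.log 2) ^ (1+δ) := by
    intro k
    have h2 : ((2^k : ℕ):ℝ) = (2:ℝ)^k := by push_cast; ring
    rw [h2]
    have hlog : Real.log ((2:ℝ)^k) = k * Real.log 2 := by
      rw [Real.log_pow]
    rw [hlog]
    have : (2:ℝ)^k ≠ 0 := by positivity
    field_simp
  simp only [heq]
  apply (summable_nat_add_iff 1).1
  have hlog2 : (0.6931471803 : ℝ) < Real.log 2 := Real.log_two_gt_d9
  have hsum : Summable (fun n : ℕ => (2:ℝ)^(1+δ) * (((n:ℝ)+1) ^ (1+δ))⁻¹) := by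
    apply Summable.mul_left
    have := (Real.summable_nat_rpow_inv (p := 1+δ)).2 (by linarith)
    have := (summable_nat_add_iff 1).2 this
    simpa using this
  apply Summable.of_nonneg_of_le (fun n => by positivity) ?_ hsum
  intro n
  have hpos : (0:ℝ) < ((n:ℝ)+1)/2 := by positivity
  have hle : ((n:ℝ)+1)/2 ≤ 1 + ((n:ℕ)+1 : ℕ) * Real.log 2 := by
    push_cast
    nlinarith [hlog2, Nat.cast_nonneg (α := ℝ) n]
  have h1 : (((n:ℝ)+1)/2) ^ (1+δ) ≤ (1 + (((n:ℕ)+1 : ℕ):ℝ) * Real.log 2) ^ (1+δ) := by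
    apply Real.rpow_le_rpow hpos.le ?_ (by linarith)
    push_cast at hle ⊢; linarith
  have h2 : (0:ℝ) < (((n:ℝ)+1)/2) ^ (1+δ) := Real.rpow_pos_of_pos hpos _
  calc 1 / (1 + (((n:ℕ)+1:ℕ):ℝ) * Real.log 2) ^ (1+δ)
      ≤ 1 / (((n:ℝ)+1)/2) ^ (1+δ) := one_div_le_one_div_of_le h2 h1
    _ = (2:ℝ)^(1+δ) * (((n:ℝ)+1) ^ (1+δ))⁻¹ := by
        rw [Real.div_rpow (by positivity) (by norm_num)]
        field_simp

lemma rpow_base_pos {δ : ℝ} (n : ℕ) : (0:ℝ) < (1 + Real.log n) ^ (1+δ) := by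
  have := log_nat_nonneg n
  exact Real.rpow_pos_of_pos (by linarith) _

lemma one_le_rpow_base {δ : ℝ} (hδ : 0 ≤ δ) (n : ℕ) : (1:ℝ) ≤ (1 + Real.log n) ^ (1+δ) := by
  have h := log_nat_nonneg n
  calc (1:ℝ) = 1 ^ (1+δ) := (Real.one_rpow _).symm
    _ ≤ (1 + Real.log n) ^ (1+δ) := Real.rpow_le_rpow (by norm_num) (by linarith) (by linarith)

lemma psiD_nonneg {δ : ℝ} (q : ℕ) : 0 ≤ psiD δ q := by
  unfold psiD
  have := (rpow_base_pos (δ := δ) q).le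
  positivity

lemma psiD_le_one {δ : ℝ} (hδ : 0 ≤ δ) {q : ℕ} (hq : 1 ≤ q) : psiD δ q ≤ 1 := by
  unfold psiD
  rw [div_le_one]
  · have h1 : (1:ℝ) ≤ (q:ℝ)^2 := by
      have : (1:ℝ) ≤ (q:ℝ) := by exact_mod_cast hq
      nlinarith
    nlinarith [one_le_rpow_base hδ q, rpow_base_pos (δ := δ) q]
  · exact mul_pos (by positivity; ) (rpow_base_pos q)

lemma dioph_aux {δ : ℝ} (hδ : 0 < δ) :
    ∀ᵐ α : ℝ ∂(volume : Measure ℝ), ∃ Q : ℕ, 1 ≤ Q ∧ ∀ q : ℕ, Q ≤ q → ∀ p : ℤ,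
      ¬ (|α - (p:ℝ) / (q:ℝ)| ≤ psiD δ q) := by
  have key : ∀ N : ℕ, ∀ᵐ α : ℝ ∂(volume : Measure ℝ), |α| < N → ∃ Q : ℕ, 1 ≤ Q ∧
      ∀ q : ℕ, Q ≤ q → ∀ p : ℤ, ¬ (|α - (p:ℝ) / (q:ℝ)| ≤ psiD δ q) := by
    intro N
    set s : ℕ → Set ℝ := fun q =>
      ⋃ p ∈ Finset.Icc (-(((N:ℤ)+1)*q)) (((N:ℤ)+1)*q), Metric.closedBall ((p:ℝ)/(q:ℝ)) (psiD δ q)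
      with hs
    have hcard : ∀ q : ℕ, ((Finset.Icc (-(((N:ℤ)+1)*q)) (((N:ℤ)+1)*q)).card : ℝ)
        = 2*((N:ℝ)+1)*q + 1 := by
      intro q
      rw [Int.card_Icc]
      have h0 : (0:ℤ) ≤ ((N:ℤ)+1)*q := by positivity
      have : (((N:ℤ)+1)*q + 1 - -(((N:ℤ)+1)*q)) = 2*((N:ℤ)+1)*q + 1 := by ring
      rw [this]
      have h1 : ((2*((N:ℤ)+1)*(q:ℤ) + 1).toNat : ℤ) = 2*((N:ℤ)+1)*(q:ℤ) + 1 :=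
        Int.toNat_of_nonneg (by positivity)
      exact_mod_cast h1
    have hμ : ∀ q : ℕ, volume (s q) ≤ ENNReal.ofReal ((2*((N:ℝ)+1)*q + 1) * (2 * psiD δ q)) := by
      intro q
      refine (measure_biUnion_finset_le _ _).trans ?_
      have : ∀ p ∈ Finset.Icc (-(((N:ℤ)+1)*q)) (((N:ℤ)+1)*q),
          volume (Metric.closedBall ((p:ℝ)/(q:ℝ)) (psiD δ q)) = ENNReal.ofReal (2 * psiD δ q) :=
        fun p _ => Real.volume_closedBall _ _
      rw [Finset.sum_congr rfl this, Finset.sum_const, nsmul_eq_mul]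
      rw [← ENNReal.ofReal_natCast, ← ENNReal.ofReal_mul (by positivity)]
      rw [hcard q]
    have hsummable : Summable (fun q : ℕ => (2*((N:ℝ)+1)*q + 1) * (2 * psiD δ q)) := by
      have hb := summable_aux hδ
      apply Summable.of_nonneg_of_le
        (fun q => by have := psiD_nonneg (δ := δ) q; positivity)
        ?_ (hb.mul_left (6*((N:ℝ)+1)))
      intro q
      cases q with
      | zero =>
        simp [psiD]
      | succ n =>
        set q := n+1
        have hq1 : (1:ℝ) ≤ (q:ℝ) := by exact_mod_cast Nat.one_le_iff_ne_zero.2 (Nat.succ_ne_zero n)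
        have hx := rpow_base_pos (δ := δ) q
        have hψ : psiD δ q = 1/((q:ℝ)^2 * (1 + Real.log q) ^ (1+δ)) := rfl
        have hN0 : (0:ℝ) ≤ (N:ℝ) := Nat.cast_nonneg N
        calc (2*((N:ℝ)+1)*q + 1) * (2 * psiD δ q)
            = (4*((N:ℝ)+1)*q + 2) / ((q:ℝ)^2 * (1 + Real.log q) ^ (1+δ)) := by
              rw [hψ]; ring
          _ ≤ (6*((N:ℝ)+1)*q) / ((q:ℝ)^2 * (1 + Real.log q) ^ (1+δ)) := by
              have hq0 : (0:ℝ) < (q:ℝ) := by linarith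
              gcongr
              nlinarith
          _ = 6*((N:ℝ)+1) * (1 / ((q:ℝ) * (1 + Real.log q) ^ (1+δ))) := by
              field_simp
    have hsum : (∑' q, volume (s q)) ≠ ⊤ := by
      refine ne_top_of_le_ne_top ?_ (ENNReal.tsum_le_tsum hμ)
      rw [← ENNReal.ofReal_tsum_of_nonneg
        (fun q => by have := psiD_nonneg (δ := δ) q; positivity) hsummable]
      exact ENNReal.ofReal_ne_top
    filter_upwards [MeasureTheory.ae_eventually_notMem hsum] with α hα hαN
    obtain ⟨Q₀, hQ₀⟩ := eventually_atTop.1 hα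
    refine ⟨max Q₀ 1, le_max_right _ _, fun q hq p hp => ?_⟩
    have hq1 : 1 ≤ q := le_trans (le_max_right _ _) hq
    apply hQ₀ q (le_trans (le_max_left _ _) hq)
    have hqR : (1:ℝ) ≤ (q:ℝ) := by exact_mod_cast hq1
    have hq0 : (0:ℝ) < q := by linarith
    -- p is in range
    have hpq : |(p:ℝ)/(q:ℝ)| ≤ (N:ℝ) + 1 := by
      have h1 : |(p:ℝ)/(q:ℝ)| ≤ |α| + |α - (p:ℝ)/(q:ℝ)| := by
        have := abs_sub_abs_le_abs_sub ((p:ℝ)/(q:ℝ)) α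
        have := abs_sub_comm ((p:ℝ)/(q:ℝ)) α
        calc |(p:ℝ)/(q:ℝ)| = |α + ((p:ℝ)/(q:ℝ) - α)| := by ring_nf
          _ ≤ |α| + |(p:ℝ)/(q:ℝ) - α| := abs_add_le _ _
          _ = |α| + |α - (p:ℝ)/(q:ℝ)| := by rw [abs_sub_comm]
      have h2 : psiD δ q ≤ 1 := psiD_le_one hδ.le hq1
      have : |α| ≤ (N:ℝ) := hαN.le
      linarith
    have hmem : p ∈ Finset.Icc (-(((N:ℤ)+1)*q)) (((N:ℤ)+1)*q) := by
      rw [Finset.mem_Icc, ← abs_le]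
      have : |(p:ℝ)| ≤ ((N:ℝ)+1) * q := by
        rw [abs_div] at hpq
        rw [abs_of_pos hq0] at hpq
        rw [div_le_iff₀ hq0] at hpq
        linarith
      have hcast : ((|p| : ℤ) : ℝ) ≤ ((((N:ℤ)+1)*q : ℤ) : ℝ) := by push_cast; simpa using this
      exact_mod_cast hcast
    exact Set.mem_biUnion hmem (Metric.mem_closedBall.2 (by rwa [Real.dist_eq]))
  have hall := MeasureTheory.ae_all_iff.2 key
  filter_upwards [hall] with α hα
  exact hα (⌊|α|⌋₊ + 1) (by push_cast; exact Nat.lt_floor_add_one _)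

lemma near_odd (x d : ℝ) (h : |Real.cos x| ≤ d) :
    ∃ k : ℤ, |x - (π/2 + k*π)| ≤ π/2 * d := by
  set k := round ((x - π/2)/π) with hkdef
  refine ⟨k, ?_⟩
  set r := x - (π/2 + k*π) with hr
  have hrle : |r| ≤ π/2 := by
    have h1 : |(x - π/2)/π - k| ≤ 1/2 := abs_sub_round _
    have h2 : r = ((x - π/2)/π - k) * π := by field_simp [hr]; ring
    rw [h2, abs_mul, abs_of_pos pi_pos]
    nlinarith [pi_pos]
  have hcos : |Real.cos x| = |Real.sin r| := by
    have hx : x = (r + π/2) + k*π := by rw [hr]; ring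
    rw [hx, Real.cos_antiperiodic.add_int_mul_eq k, Real.cos_add_pi_div_two]
    rcases Int.units_eq_one_or k.negOnePow with h | h <;> simp [h]
  have hsin : 2/π * |r| ≤ |Real.sin r| := Real.mul_abs_le_abs_sin hrle
  rw [hcos] at h
  have h4 : |r| * 2 / π ≤ d := by
    rw [mul_comm] at hsin
    rw [← mul_div_assoc] at hsin
    exact hsin.trans h
  rw [div_le_iff₀ pi_pos] at h4
  nlinarith [pi_pos]

lemma re_reduction (t α : ℝ) :
    Real.cos (t/2)^2 + Real.cos (t*α/2)^2 ≤ ‖1 + (Complex.exp ((t : ℂ) * Complex.I)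
            + Complex.exp ((t : ℂ) * (α : ℂ) * Complex.I)) / 2‖ := by
  have h1 : (1 + (Complex.exp ((t : ℂ) * Complex.I)
      + Complex.exp ((t : ℂ) * (α : ℂ) * Complex.I)) / 2).re
      = 1 + (Real.cos t + Real.cos (t*α))/2 := by
    have ht : (t:ℂ) * (α:ℂ) = ((t*α : ℝ) : ℂ) := by push_cast; ring
    rw [ht, Complex.exp_mul_I, Complex.exp_mul_I]
    simp [Complex.add_re, Complex.div_re, Complex.cos_ofReal_re, Complex.sin_ofReal_re,
      Complex.normSq, ← Complex.ofReal_mul, Complex.sin_ofReal_im]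
  have h2 := Complex.re_le_norm (1 + (Complex.exp ((t : ℂ) * Complex.I)
      + Complex.exp ((t : ℂ) * (α : ℂ) * Complex.I)) / 2)
  rw [h1] at h2
  have c1 := Real.cos_sq (t/2)
  rw [show 2*(t/2) = t by ring] at c1
  have c2 := Real.cos_sq (t*α/2)
  rw [show 2*(t*α/2) = t*α by ring] at c2
  linarith

set_option maxHeartbeats 2000000 in
/-- For every `ε > 0`, for Lebesgue almost every `α ∈ ℝ` there is `t₀ > 0` such that
`1/(t² (log t)^{2+ε}) ≤ |1 + (e^{it} + e^{itα})/2|` for all `t ≥ t₀`. -/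
theorem ae_g_lower_bound (ε : ℝ) (hε : 0 < ε) :
    ∀ᵐ (α : ℝ) ∂(volume : Measure ℝ), ∃ t₀ : ℝ, 0 < t₀ ∧ ∀ t : ℝ, t₀ ≤ t →
      1 / (t ^ 2 * Real.log t ^ (2 + ε))
        ≤ ‖1 + (Complex.exp ((t : ℂ) * Complex.I)
            + Complex.exp ((t : ℂ) * (α : ℂ) * Complex.I)) / 2‖ := by
  have hδ : 0 < ε/4 := by linarith
  filter_upwards [dioph_aux hδ] with α hα
  obtain ⟨Q, hQ1, hQ⟩ := hα
  have h1 : Tendsto (fun t : ℝ => Real.log t ^ (ε/4)) atTop atTop :=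
    (tendsto_rpow_atTop (by linarith : (0:ℝ) < ε/4)).comp Real.tendsto_log_atTop
  have hev : ∀ᶠ t : ℝ in atTop, 3 ≤ t ∧ π*((Q:ℝ)+1) + π ≤ t ∧
      (1+|α|) * (2:ℝ) ^ ((1:ℝ)+ε/4) ≤ Real.log t ^ (ε/4) :=
    (eventually_ge_atTop 3).and ((eventually_ge_atTop _).and (h1.eventually_ge_atTop _))
  obtain ⟨T, hT⟩ := eventually_atTop.1 hev
  refine ⟨max T 1, lt_of_lt_of_le one_pos (le_max_right _ _), fun t ht => ?_⟩
  obtain ⟨ht3, htQ, htlog⟩ := hT t ((le_max_left _ _).trans ht)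
  have ht0 : (0:ℝ) < t := by linarith
  have hlog1 : 1 ≤ Real.log t := by
    rw [Real.le_log_iff_exp_le ht0]
    have := Real.exp_one_lt_d9
    linarith
  have hlogpos : 0 < Real.log t := by linarith
  set L := Real.log t ^ ((1:ℝ)+ε/2) with hL
  have hL1 : 1 ≤ L := by
    calc (1:ℝ) = 1 ^ ((1:ℝ)+ε/2) := (Real.one_rpow _).symm
      _ ≤ L := Real.rpow_le_rpow (by norm_num) hlog1 (by linarith)
  have hLpos : 0 < L := by linarith
  set d := 1 / (t * L) with hd
  have hd0 : 0 < d := by positivity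
  have hd1 : d ≤ 1 := by
    rw [hd, div_le_one (by positivity)]
    nlinarith
  refine le_trans ?_ (re_reduction t α)
  by_contra hcon
  push_neg at hcon
  have hL2 : L^2 = Real.log t ^ ((2:ℝ)+ε) := by
    rw [hL, ← Real.rpow_natCast (Real.log t ^ ((1:ℝ)+ε/2)) 2, ← Real.rpow_mul hlogpos.le]
    congr 1
    push_cast; ring
  have hdd : 1/(t^2 * Real.log t ^ ((2:ℝ)+ε)) = d^2 := by
    rw [hd, div_pow, one_pow, mul_pow, hL2]
  rw [hdd] at hcon
  have hsq1 : Real.cos (t/2)^2 < d^2 := by nlinarith [sq_nonneg (Real.cos (t*α/2))]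
  have hsq2 : Real.cos (t*α/2)^2 < d^2 := by nlinarith [sq_nonneg (Real.cos (t/2))]
  have hc1 : |Real.cos (t/2)| ≤ d :=
    (lt_of_pow_lt_pow_left₀ 2 hd0.le (by rw [sq_abs]; exact hsq1)).le
  have hc2 : |Real.cos (t*α/2)| ≤ d :=
    (lt_of_pow_lt_pow_left₀ 2 hd0.le (by rw [sq_abs]; exact hsq2)).le
  obtain ⟨k, hk⟩ := near_odd (t/2) d hc1
  obtain ⟨m, hm⟩ := near_odd (t*α/2) d hc2
  have hkt : |t - (2*(k:ℝ)+1)*π| ≤ π * d := by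
    rw [show t/2 - (π/2 + (k:ℝ)*π) = (t - (2*(k:ℝ)+1)*π)/2 by ring, abs_div, abs_two] at hk
    linarith
  have hmt : |t*α - (2*(m:ℝ)+1)*π| ≤ π * d := by
    rw [show t*α/2 - (π/2 + (m:ℝ)*π) = (t*α - (2*(m:ℝ)+1)*π)/2 by ring, abs_div, abs_two] at hm
    linarith
  set qr : ℝ := 2*(k:ℝ)+1 with hqr
  set pr : ℝ := 2*(m:ℝ)+1 with hpr
  have hπ3 : 3 < π := pi_gt_three
  have hπd : π * d ≤ π := by nlinarith [pi_pos]
  have hq_lb : t - π ≤ qr * π := by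
    have h := (abs_le.1 hkt).2
    linarith
  have hq_ub' : qr * π ≤ t + π := by
    have h := (abs_le.1 hkt).1
    linarith
  have hQr : (Q:ℝ) + 1 ≤ qr := by
    have h' : ((Q:ℝ)+1)*π ≤ qr*π := by linarith
    exact le_of_mul_le_mul_right h' pi_pos
  have hqr1 : 1 ≤ qr := by
    have : (0:ℝ) ≤ (Q:ℝ) := Nat.cast_nonneg Q
    linarith
  have hqrpos : 0 < qr := by linarith
  have hq_ub : qr ≤ t := by
    have h' : qr*π ≤ t*π := by
      nlinarith [mul_nonneg (by linarith : (0:ℝ) ≤ π - 3) (by linarith : (0:ℝ) ≤ t - 1)]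
    exact le_of_mul_le_mul_right h' pi_pos
  have hint0 : (0:ℤ) ≤ 2*k+1 := by
    by_contra hneg
    push_neg at hneg
    have : ((2*k+1 : ℤ):ℝ) < 0 := by exact_mod_cast hneg
    push_cast at this
    rw [hqr] at hqrpos
    linarith
  have hq_cast : (((2*k+1).toNat : ℕ) : ℝ) = qr := by
    have h1 : (((2*k+1).toNat : ℤ) : ℝ) = ((2*k+1 : ℤ) : ℝ) := by
      rw [Int.toNat_of_nonneg hint0]
    rw [hqr]
    push_cast at h1 ⊢
    linarith
  have hQq : Q ≤ (2*k+1).toNat := by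
    have : (Q:ℝ) ≤ (((2*k+1).toNat : ℕ) : ℝ) := by rw [hq_cast]; linarith
    exact_mod_cast this
  have hψq : psiD (ε/4) (2*k+1).toNat = 1/(qr^2 * (1 + Real.log qr)^((1:ℝ)+ε/4)) := by
    unfold psiD
    rw [hq_cast]
  have hpcast : ((2*m+1 : ℤ):ℝ) = pr := by rw [hpr]; push_cast; ring
  -- diophantine estimate
  have key1 : |α - pr/qr| ≤ d*(1+|α|)/qr := by
    have hπpos := pi_pos
    have hrepr : α - pr/qr = ((qr*π - t)*α + (t*α - pr*π))/(qr*π) := by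
      field_simp
      ring
    rw [hrepr, abs_div, abs_of_pos (by positivity : (0:ℝ) < qr*π)]
    have hnum : |(qr*π - t)*α + (t*α - pr*π)| ≤ π*d*|α| + π*d := by
      have h1 : |qr*π - t| ≤ π*d := by rw [abs_sub_comm]; exact hkt
      have h2 : |t*α - pr*π| ≤ π*d := hmt
      calc |(qr*π - t)*α + (t*α - pr*π)| ≤ |(qr*π - t)*α| + |t*α - pr*π| := abs_add_le _ _
        _ = |qr*π - t| * |α| + |t*α - pr*π| := by rw [abs_mul]
        _ ≤ π*d*|α| + π*d :=
          add_le_add (mul_le_mul_of_nonneg_right h1 (abs_nonneg α)) h2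
    calc |(qr*π - t)*α + (t*α - pr*π)|/(qr*π) ≤ (π*d*|α| + π*d)/(qr*π) := by
          gcongr
      _ = d*(1+|α|)/qr := by
          field_simp
          ring
  have key2 : d*(1+|α|)/qr ≤ psiD (ε/4) ((2*k+1).toNat) := by
    rw [hψq]
    set X := (1 + Real.log qr)^((1:ℝ)+ε/4) with hX
    have hlogqr : 0 ≤ Real.log qr := Real.log_nonneg hqr1
    have hXpos : 0 < X := Real.rpow_pos_of_pos (by linarith) _
    rw [div_le_div_iff₀ hqrpos (by positivity)]
    have main : d*(1+|α|) * (qr * X) ≤ 1 := by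
      have hXle : X ≤ 2^((1:ℝ)+ε/4) * Real.log t ^ ((1:ℝ)+ε/4) := by
        have h1 : Real.log qr ≤ Real.log t := Real.log_le_log hqrpos hq_ub
        have h2 : 1 + Real.log qr ≤ 2 * Real.log t := by linarith
        calc X ≤ (2 * Real.log t)^((1:ℝ)+ε/4) :=
              Real.rpow_le_rpow (by linarith) h2 (by linarith)
          _ = 2^((1:ℝ)+ε/4) * Real.log t ^ ((1:ℝ)+ε/4) := Real.mul_rpow (by norm_num) hlogpos.le
      have hα0 : (0:ℝ) ≤ 1 + |α| := by have := abs_nonneg α; linarith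
      have step1 : d*(1+|α|) * (qr * X)
          ≤ d*(1+|α|) * (t * (2^((1:ℝ)+ε/4) * Real.log t ^ ((1:ℝ)+ε/4))) := by
        apply mul_le_mul_of_nonneg_left ?_ (by positivity)
        apply mul_le_mul hq_ub hXle hXpos.le ht0.le
      have heq : d*(1+|α|) * (t * (2^((1:ℝ)+ε/4) * Real.log t ^ ((1:ℝ)+ε/4)))
          = (1+|α|) * 2^((1:ℝ)+ε/4) * (Real.log t ^ ((1:ℝ)+ε/4) / L) := by
        rw [hd]
        field_simp
      have hquot : Real.log t ^ ((1:ℝ)+ε/4) / L = (Real.log t ^ (ε/4))⁻¹ := by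
        rw [hL, ← Real.rpow_sub hlogpos,
          show (1:ℝ)+ε/4 - (1+ε/2) = -(ε/4) by ring, Real.rpow_neg hlogpos.le]
      have hpow : 0 < Real.log t ^ (ε/4) := Real.rpow_pos_of_pos hlogpos _
      have hfin : (1+|α|) * 2^((1:ℝ)+ε/4) * (Real.log t ^ (ε/4))⁻¹ ≤ 1 := by
        rw [← div_eq_mul_inv, div_le_one hpow]
        exact htlog
      calc d*(1+|α|) * (qr * X)
          ≤ d*(1+|α|) * (t * (2^((1:ℝ)+ε/4) * Real.log t ^ ((1:ℝ)+ε/4))) := step1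
        _ = (1+|α|) * 2^((1:ℝ)+ε/4) * (Real.log t ^ ((1:ℝ)+ε/4) / L) := heq
        _ = (1+|α|) * 2^((1:ℝ)+ε/4) * (Real.log t ^ (ε/4))⁻¹ := by rw [hquot]
        _ ≤ 1 := hfin
    calc d*(1+|α|) * (qr^2 * X) = (d*(1+|α|) * (qr * X)) * qr := by ring
      _ ≤ 1 * qr := mul_le_mul_of_nonneg_right main hqrpos.le
  refine (hQ ((2*k+1).toNat) hQq (2*m+1)) ?_
  rw [hq_cast, hpcast]
  exact key1.trans key2
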